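/- Let p, q ∈ ℂ be non-integers with Re(p+q) > 1, and let n be a nonnegative integer. Then the series ∑_{k=0}^∞ [Γ(1−p+n+k) · Γ(1−q+k)] / [Γ(1−p) · Γ(1−q) · Γ(n+k+1) · Γ(k+1)] converges, and its sum equals (−1)^n · Γ(p+q−1) / (Γ(p−n) · Γ(q+n)). (Equivalently, in Pochhammer notation, ∑_{k≥0} (1−p)_{n+k} (1−q)_k / ((n+k)!·k!) = (−1)^n Γ(p+q−1)/(Γ(p−n)Γ(q+n)); this is the formula for the Fourier coefficients of the distribution (1−z·conj u)^{p−1}(1−conj(z)·u)^{q−1} on the torus.) -/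

import Mathlib

open Filter Finset Complex Topology

noncomputable def Complex.abs : AbsoluteValue ℂ ℝ :=
  IsAbsoluteValue.toAbsoluteValue (norm : ℂ → ℝ)

lemma Complex.norm_eq_abs (z : ℂ) : ‖z‖ = Complex.abs z := rfl

lemma Complex.abs_natCast (m : ℕ) : Complex.abs (m : ℂ) = m := Complex.norm_natCast m

lemma Complex.abs_ofReal (r : ℝ) : Complex.abs (r : ℂ) = |r| := Complex.norm_real r

lemma Complex.abs_cpow_eq_rpow_re_of_pos {x : ℝ} (hx : 0 < x) (y : ℂ) :
    Complex.abs ((x : ℂ) ^ y) = x ^ y.re := Complex.norm_cpow_eq_rpow_re_of_pos hx y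

noncomputable def poch (x : ℂ) (k : ℕ) : ℂ := ∏ j ∈ Finset.range k, (x + j)

lemma poch_zero (x : ℂ) : poch x 0 = 1 := rfl

lemma poch_succ (x : ℂ) (k : ℕ) : poch x (k+1) = poch x k * (x + k) :=
  Finset.prod_range_succ _ _

lemma Gamma_poch (x : ℂ) (hx : ∀ j : ℕ, x + j ≠ 0) (k : ℕ) :
    Complex.Gamma (x + k) = poch x k * Complex.Gamma x := by
  induction k with
  | zero => simp [poch_zero]
  | succ k ih =>
      have : x + (k+1 : ℕ) = (x + k) + 1 := by push_cast; ring
      rw [this, Complex.Gamma_add_one _ (hx k), ih, poch_succ]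
      ring

lemma inv_GammaSeq_eq (x : ℂ) (m : ℕ) :
    (Complex.GammaSeq x m)⁻¹ = poch x (m+1) / ((m:ℂ) ^ x * m.factorial) := by
  rw [Complex.GammaSeq, inv_div]
  rfl

lemma tendsto_poch_div (x : ℂ) (hx : Complex.Gamma x ≠ 0) :
    Tendsto (fun m : ℕ => poch x (m+1) / ((m:ℂ) ^ x * m.factorial)) atTop
      (𝓝 (Complex.Gamma x)⁻¹) := by
  have := (Complex.GammaSeq_tendsto_Gamma x).inv₀ hx
  simpa only [inv_GammaSeq_eq] using this

lemma poch_bound (x : ℂ) (hx : Complex.Gamma x ≠ 0) :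
    ∃ C : ℝ, 0 ≤ C ∧ ∀ k : ℕ, 1 ≤ k →
      Complex.abs (poch x (k+1)) ≤ C * (k:ℝ) ^ (x.re) * k.factorial := by
  have h := (tendsto_poch_div x hx).norm
  obtain ⟨C, hC⟩ := h.bddAbove_range
  refine ⟨C, le_trans (norm_nonneg _) (hC ⟨0, rfl⟩), fun k hk => ?_⟩
  have hk0 : (0:ℝ) < (k:ℝ) := by exact_mod_cast hk
  have habs : Complex.abs ((k:ℂ) ^ x) = (k:ℝ) ^ x.re := by
    rw [show ((k:ℂ)) = (((k:ℝ)):ℂ) by push_cast; rfl]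
    exact Complex.abs_cpow_eq_rpow_re_of_pos hk0 x
  have hne : ((k:ℂ) ^ x * (k.factorial : ℂ)) ≠ 0 := by
    apply mul_ne_zero
    · simp only [ne_eq, Complex.cpow_eq_zero_iff, not_and]
      intro h; exact absurd h (by exact_mod_cast hk0.ne')
    · exact_mod_cast (Nat.cast_ne_zero (R := ℂ)).mpr k.factorial_ne_zero
  have := hC ⟨k, rfl⟩
  have heq : Complex.abs (poch x (k+1)) =
      ‖poch x (k+1) / ((k:ℂ) ^ x * k.factorial)‖ * ((k:ℝ) ^ x.re * k.factorial) := by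
    rw [norm_div, Complex.norm_eq_abs, Complex.norm_eq_abs, map_mul, habs,
      Complex.abs_natCast, div_mul_cancel₀]
    positivity
  rw [heq, mul_assoc]
  exact mul_le_mul_of_nonneg_right this (by positivity)

lemma poch_shift (c : ℂ) (k : ℕ) : c * poch (c+1) k = poch c k * (c + k) := by
  have h1 : poch c (k+1) = c * poch (c+1) k := by
    rw [poch, Finset.prod_range_succ']
    simp only [Nat.cast_zero, add_zero, mul_comm]
    congr 1
    apply Finset.prod_congr rfl
    intro j _
    push_cast
    ring
  rw [← h1, poch_succ]

lemma poch_ne_zero_of_nat (a : ℕ) (ha : 1 ≤ a) (k : ℕ) : poch (a:ℂ) k ≠ 0 := by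
  apply Finset.prod_ne_zero_iff.mpr
  intro j _
  have h : (0:ℝ) < (a:ℝ) + j := by
    have : (1:ℝ) ≤ (a:ℝ) := by exact_mod_cast ha
    linarith [Nat.cast_nonneg (α := ℝ) j]
  intro hcon
  apply h.ne'
  have : ((a:ℂ) + j) = (((a:ℝ) + j : ℝ) : ℂ) := by push_cast; rfl
  rw [this] at hcon
  exact_mod_cast hcon

lemma abs_poch_nat (a k : ℕ) :
    Complex.abs (poch (a:ℂ) k) = ∏ j ∈ Finset.range k, ((a:ℝ) + j) := by
  rw [poch, map_prod]
  apply Finset.prod_congr rfl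
  intro j _
  rw [show ((a:ℂ) + j) = (((a:ℝ) + j : ℝ) : ℂ) by push_cast; rfl, Complex.abs_ofReal,
    _root_.abs_of_nonneg (by positivity)]

lemma fact_prod (a k : ℕ) :
    (a.factorial : ℝ) * ∏ j ∈ Finset.range k, ((a:ℝ)+1+j) = (a+k).factorial := by
  induction k with
  | zero => simp
  | succ k ih =>
      rw [Finset.prod_range_succ, ← mul_assoc, ih]
      rw [show a + (k+1) = (a+k) + 1 by ring, Nat.factorial_succ]
      push_cast
      ring

lemma step_id (α β c : ℂ) (k : ℕ) (hck : poch c k ≠ 0) (hc : c ≠ 0) (hck' : c + k ≠ 0) :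
    c*(c-α-β) * (poch α k * poch β k / (poch c k * k.factorial))
      - (c-α)*(c-β) * (poch α k * poch β k / (poch (c+1) k * k.factorial))
    = (c * k * (poch α k * poch β k / (poch c k * k.factorial)))
      - (c * (k+1) * (poch α (k+1) * poch β (k+1) / (poch c (k+1) * (k+1).factorial))) := by
  have hshift : poch (c+1) k = poch c k * (c + k) / c := by
    rw [eq_div_iff hc, ← poch_shift c k]; ring
  have hfac : ((k.factorial : ℂ)) ≠ 0 := by exact_mod_cast k.factorial_ne_zero
  have hk1 : ((k:ℂ)+1) ≠ 0 := by
    exact_mod_cast Nat.cast_add_one_ne_zero (R := ℂ) k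
  rw [poch_succ α k, poch_succ β k, poch_succ c k, hshift, Nat.factorial_succ]
  push_cast
  field_simp
  ring

set_option maxHeartbeats 2000000 in
lemma gauss (α β : ℂ) (n : ℕ) (hα : Complex.Gamma α ≠ 0) (hβ : Complex.Gamma β ≠ 0)
    (hA : Complex.Gamma ((n:ℂ)+1-α) ≠ 0) (hB : Complex.Gamma ((n:ℂ)+1-β) ≠ 0)
    (hre : α.re + β.re < (n:ℝ)+1) :
    HasSum (fun k => poch α k * poch β k / (poch ((n:ℂ)+1) k * (k.factorial : ℂ)))
      (Complex.Gamma ((n:ℂ)+1) * Complex.Gamma ((n:ℂ)+1-α-β) /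
        (Complex.Gamma ((n:ℂ)+1-α) * Complex.Gamma ((n:ℂ)+1-β))) := by
  classical
  set s : ℕ → ℕ → ℂ :=
    fun m k => poch α k * poch β k / (poch ((n+1+m : ℕ):ℂ) k * (k.factorial : ℂ)) with hs_def
  set Q : ℕ → ℕ → ℝ :=
    fun m k => ∏ j ∈ Finset.range k, (((n+1+m : ℕ):ℝ) + j) with hQ_def
  have hQpos : ∀ m k, 0 < Q m k := by
    intro m k
    apply Finset.prod_pos
    intro j _
    positivity
  have habs : ∀ m k, Complex.abs (s m k)
      = Complex.abs (poch α k) * Complex.abs (poch β k) / (Q m k * (k.factorial : ℝ)) := by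
    intro m k
    rw [hs_def]
    simp only [map_div₀, map_mul, abs_poch_nat, Complex.abs_natCast]
    rfl
  obtain ⟨Ca, hCa0, hCa⟩ := poch_bound α hα
  obtain ⟨Cb, hCb0, hCb⟩ := poch_bound β hβ
  set e : ℝ := α.re + β.re - ((n:ℝ)+2) with he_def
  have he : e < -1 := by rw [he_def]; linarith
  set D : ℝ := Ca * Cb * (n.factorial : ℝ) with hD_def
  -- key numeric inequality
  have hkey : ∀ k : ℕ, 1 ≤ k → ((k:ℝ))^(n+2) * ((k.factorial:ℝ))^2
      ≤ ((n+k+1).factorial : ℝ) * ((k+1).factorial : ℝ) := by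
    intro k hk
    have hfact : ((k.factorial:ℝ)) * ∏ j ∈ Finset.range (n+1), ((k:ℝ)+1+j)
        = ((k+(n+1)).factorial : ℝ) := fact_prod k (n+1)
    have hprodge : ((k:ℝ))^(n+1) ≤ ∏ j ∈ Finset.range (n+1), ((k:ℝ)+1+j) := by
      calc ((k:ℝ))^(n+1) = ∏ _j ∈ Finset.range (n+1), (k:ℝ) := by
            rw [Finset.prod_const, Finset.card_range]
        _ ≤ ∏ j ∈ Finset.range (n+1), ((k:ℝ)+1+j) := by
            apply Finset.prod_le_prod
            · intro j _; positivity
            · intro j _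
              have h0 : (0:ℝ) ≤ (j:ℕ) := Nat.cast_nonneg j
              linarith
    have hkpos : (0:ℝ) ≤ (k:ℝ) := by positivity
    calc ((k:ℝ))^(n+2) * ((k.factorial:ℝ))^2
        = ((k.factorial:ℝ) * (k:ℝ)^(n+1)) * ((k:ℝ) * (k.factorial:ℝ)) := by ring
      _ ≤ ((k.factorial:ℝ) * ∏ j ∈ Finset.range (n+1), ((k:ℝ)+1+j))
            * (((k:ℝ)+1) * (k.factorial:ℝ)) := by
          apply mul_le_mul
          · exact mul_le_mul_of_nonneg_left hprodge (by positivity)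
          · apply mul_le_mul_of_nonneg_right _ (by positivity)
            linarith
          · positivity
          · positivity
      _ = ((n+k+1).factorial : ℝ) * ((k+1).factorial : ℝ) := by
          rw [hfact, show k+(n+1) = n+k+1 by ring, Nat.factorial_succ (k)]
          push_cast
          ring
  -- monotonicity of Q in m
  have hQmono : ∀ m k, Q 0 k ≤ Q m k := by
    intro m k
    apply Finset.prod_le_prod
    · intro j _; positivity
    · intro j _
      have : ((n+1+0:ℕ):ℝ) ≤ ((n+1+m:ℕ):ℝ) := by exact_mod_cast by omega
      linarith
  have hQ0fact : ∀ k, ((n.factorial : ℝ)) * Q 0 (k) = ((n+k).factorial : ℝ) := by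
    intro k
    have := fact_prod n k
    rw [hQ_def]
    convert this using 2 with j
    · push_cast; ring
  -- the master bound
  have hsb : ∀ m k, 1 ≤ k → Complex.abs (s m (k+1)) ≤ D * (k:ℝ)^e := by
    intro m k hk
    have hk0 : (0:ℝ) < (k:ℝ) := by exact_mod_cast hk
    rw [habs]
    have hnum : Complex.abs (poch α (k+1)) * Complex.abs (poch β (k+1))
        ≤ (Ca * (k:ℝ)^α.re * k.factorial) * (Cb * (k:ℝ)^β.re * k.factorial) :=
      mul_le_mul (hCa k hk) (hCb k hk) (Complex.abs.nonneg _) (by positivity)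
    have hlow : ((k:ℝ))^(n+2) * ((k.factorial:ℝ))^2 / (n.factorial : ℝ)
        ≤ Q m (k+1) * ((k+1).factorial : ℝ) := by
      rw [div_le_iff₀ (by positivity)]
      calc ((k:ℝ))^(n+2) * ((k.factorial:ℝ))^2
          ≤ ((n+(k+1)).factorial : ℝ) * ((k+1).factorial : ℝ) := by
            have := hkey k hk
            rw [show n+(k+1) = n+k+1 by ring]
            exact this
        _ = (Q 0 (k+1) * ((k+1).factorial:ℝ)) * (n.factorial : ℝ) := by
            rw [← hQ0fact (k+1)]; ring
        _ ≤ (Q m (k+1) * ((k+1).factorial:ℝ)) * (n.factorial : ℝ) := by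
            apply mul_le_mul_of_nonneg_right _ (by positivity)
            exact mul_le_mul_of_nonneg_right (hQmono m (k+1)) (by positivity)
    have hstep : Complex.abs (poch α (k+1)) * Complex.abs (poch β (k+1))
          / (Q m (k+1) * ((k+1).factorial : ℝ))
        ≤ ((Ca * (k:ℝ)^α.re * k.factorial) * (Cb * (k:ℝ)^β.re * k.factorial))
          / (((k:ℝ))^(n+2) * ((k.factorial:ℝ))^2 / (n.factorial : ℝ)) :=
      div_le_div₀ (by positivity) hnum (by positivity) hlow
    refine hstep.trans (le_of_eq ?_)
    have hrp : (k:ℝ)^α.re * (k:ℝ)^β.re / (k:ℝ)^((n:ℕ)+2)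
        = (k:ℝ)^e := by
      rw [← Real.rpow_natCast (k:ℝ) (n+2), ← Real.rpow_add hk0, ← Real.rpow_sub hk0]
      congr 1
      rw [he_def]
      push_cast
      ring
    rw [← hrp, hD_def]
    have hfne : ((k.factorial:ℝ)) ≠ 0 := by positivity
    have hnfne : ((n.factorial:ℝ)) ≠ 0 := by positivity
    have hkne : ((k:ℝ))^(n+2) ≠ 0 := by positivity
    field_simp
  -- summability
  have hg : Summable (fun k : ℕ => D * ((k:ℝ))^e) :=
    (Real.summable_nat_rpow.mpr he).mul_left D
  have hg1 : Summable (fun k : ℕ => D * (((k+1:ℕ)):ℝ)^e) :=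
    (summable_nat_add_iff 1).mpr hg
  have hsum : ∀ m, Summable (s m) := by
    intro m
    rw [← summable_nat_add_iff 2]
    apply Summable.of_norm_bounded hg1
    intro k
    have h := hsb m (k+1) (by omega)
    simpa [Complex.norm_eq_abs] using h
  have hnsum : ∀ m, Summable (fun k => Complex.abs (s m (k+1))) := by
    intro m
    rw [← summable_nat_add_iff 1]
    apply Summable.of_nonneg_of_le (fun k => Complex.abs.nonneg _)
      (fun k => hsb m (k+1) (by omega)) hg1
  have hs0 : ∀ m, s m 0 = 1 := by
    intro m
    simp [hs_def, poch_zero]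
  -- comparison of tails
  have hterm : ∀ m k, Complex.abs (s m (k+1))
      ≤ (((n:ℝ)+1)/((n:ℝ)+1+m)) * Complex.abs (s 0 (k+1)) := by
    intro m k
    rw [habs, habs]
    set N : ℝ := Complex.abs (poch α (k+1)) * Complex.abs (poch β (k+1)) with hN_def
    have hN0 : 0 ≤ N := by rw [hN_def]; positivity
    have hq : (((n:ℝ)+1+m)) * Q 0 (k+1) ≤ (((n:ℝ)+1)) * Q m (k+1) := by
      have hpeel : ∀ m' : ℕ, Q m' (k+1)
          = (((n+1+m':ℕ)):ℝ) * ∏ j ∈ Finset.range k, ((((n+1+m':ℕ)):ℝ) + (j+1)) := by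
        intro m'
        simp only [hQ_def]
        rw [Finset.prod_range_succ']
        push_cast
        ring
      rw [hpeel 0, hpeel m]
      have hmono : ∏ j ∈ Finset.range k, ((((n+1+0:ℕ)):ℝ) + (j+1))
          ≤ ∏ j ∈ Finset.range k, ((((n+1+m:ℕ)):ℝ) + (j+1)) := by
        apply Finset.prod_le_prod
        · intro j _; positivity
        · intro j _
          have : ((n+1+0:ℕ):ℝ) ≤ ((n+1+m:ℕ):ℝ) := by exact_mod_cast by omega
          linarith
      have hcast0 : ((n+1+0:ℕ):ℝ) = (n:ℝ)+1 := by push_cast; ring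
      have hcastm : ((n+1+m:ℕ):ℝ) = (n:ℝ)+1+m := by push_cast; ring
      rw [hcast0, hcastm]
      calc ((n:ℝ)+1+m) * (((n:ℝ)+1) * ∏ j ∈ Finset.range k, ((n:ℝ)+1 + (j+1)))
          = ((n:ℝ)+1) * (((n:ℝ)+1+m) * ∏ j ∈ Finset.range k, ((n:ℝ)+1 + (j+1))) := by ring
        _ ≤ ((n:ℝ)+1) * (((n:ℝ)+1+m) * ∏ j ∈ Finset.range k, ((n:ℝ)+1+m + (j+1))) := by
            apply mul_le_mul_of_nonneg_left _ (by positivity)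
            apply mul_le_mul_of_nonneg_left _ (by positivity)
            calc ∏ j ∈ Finset.range k, ((n:ℝ)+1 + (j+1))
                = ∏ j ∈ Finset.range k, (((n+1+0:ℕ):ℝ) + (j+1)) := by rw [hcast0]
              _ ≤ ∏ j ∈ Finset.range k, (((n+1+m:ℕ):ℝ) + (j+1)) := hmono
              _ = ∏ j ∈ Finset.range k, ((n:ℝ)+1+m + (j+1)) := by rw [hcastm]
    have hrhs : (((n:ℝ)+1)/((n:ℝ)+1+m)) * (N / (Q 0 (k+1) * ((k+1).factorial : ℝ)))
        = (((n:ℝ)+1) * N) / ((((n:ℝ)+1+m)) * (Q 0 (k+1) * ((k+1).factorial : ℝ))) := by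
      rw [div_mul_div_comm]
    rw [hrhs, div_le_div_iff₀ (by positivity) (by positivity)]
    calc N * ((((n:ℝ)+1+m)) * (Q 0 (k+1) * ((k+1).factorial : ℝ)))
        = (N * ((k+1).factorial : ℝ)) * ((((n:ℝ)+1+m)) * Q 0 (k+1)) := by ring
      _ ≤ (N * ((k+1).factorial : ℝ)) * ((((n:ℝ)+1)) * Q m (k+1)) := by
          apply mul_le_mul_of_nonneg_left hq (by positivity)
      _ = ((n:ℝ)+1) * N * (Q m (k+1) * ((k+1).factorial : ℝ)) := by ring
  have htails : ∀ m, Complex.abs (∑' k, s m (k+1))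
      ≤ (((n:ℝ)+1)/((n:ℝ)+1+m)) * ∑' k, Complex.abs (s 0 (k+1)) := by
    intro m
    calc Complex.abs (∑' k, s m (k+1)) ≤ ∑' k, Complex.abs (s m (k+1)) := by
          have h1 := norm_tsum_le_tsum_norm (f := fun k => s m (k+1))
            (by simpa only [Complex.norm_eq_abs] using hnsum m)
          simpa only [Complex.norm_eq_abs] using h1
      _ ≤ ∑' k, (((n:ℝ)+1)/((n:ℝ)+1+m)) * Complex.abs (s 0 (k+1)) :=
          Summable.tsum_le_tsum (hterm m) (hnsum m) ((hnsum 0).mul_left _)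
      _ = (((n:ℝ)+1)/((n:ℝ)+1+m)) * ∑' k, Complex.abs (s 0 (k+1)) := tsum_mul_left
  have hrat : Tendsto (fun m : ℕ =>
      (((n:ℝ)+1)/((n:ℝ)+1+m)) * ∑' k, Complex.abs (s 0 (k+1))) atTop (𝓝 0) := by
    have h1 : Tendsto (fun m : ℕ => ((n:ℝ)+1+m)) atTop atTop := by
      apply tendsto_atTop_add_const_left
      exact tendsto_natCast_atTop_atTop
    have h2 : Tendsto (fun m : ℕ => ((n:ℝ)+1)/((n:ℝ)+1+m)) atTop (𝓝 0) :=
      Tendsto.div_atTop tendsto_const_nhds h1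
    simpa using h2.mul_const (∑' k, Complex.abs (s 0 (k+1)))
  have htail0 : Tendsto (fun m => ∑' k, s m (k+1)) atTop (𝓝 0) := by
    apply squeeze_zero_norm _ hrat
    intro m
    simpa [Complex.norm_eq_abs] using htails m
  have hS1 : Tendsto (fun m => ∑' k, s m k) atTop (𝓝 1) := by
    have heq : ∀ m, ∑' k, s m k = 1 + ∑' k, s m (k+1) := by
      intro m
      rw [Summable.tsum_eq_zero_add (hsum m), hs0 m]
    rw [show (1:ℂ) = 1 + 0 by ring]
    exact Tendsto.congr (fun m => (heq m).symm) (tendsto_const_nhds.add htail0)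
  -- recurrence
  set c : ℕ → ℂ := fun m => ((n+1+m : ℕ):ℂ) with hc_def
  have hcne : ∀ m, c m ≠ 0 := by
    intro m
    simp only [hc_def]
    exact Nat.cast_ne_zero.mpr (by omega)
  have hcre : ∀ m, 0 < (c m - α - β).re := by
    intro m
    simp only [hc_def, Complex.sub_re, Complex.natCast_re]
    push_cast
    have : (0:ℝ) ≤ (m:ℝ) := by positivity
    linarith
  have hcsub : ∀ m, c m - α - β ≠ 0 := by
    intro m h
    simpa [h] using (hcre m)
  set S : ℕ → ℂ := fun m => ∑' k, s m k with hS_def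
  have hrec : ∀ m, S m = ((c m - α)*(c m - β)/((c m)*(c m - α - β))) * S (m+1) := by
    intro m
    have hA' : HasSum
        (fun k => (c m * (c m - α - β)) * s m k - ((c m - α)*(c m - β)) * s (m+1) k)
        ((c m * (c m - α - β)) * S m - ((c m - α)*(c m - β)) * S (m+1)) :=
      (((hsum m).hasSum.mul_left _).sub ((hsum (m+1)).hasSum.mul_left _))
    set x : ℕ → ℂ := fun k => c m * k * s m k with hx_def
    have h2 : ∀ k, (c m * (c m - α - β)) * s m k - ((c m - α)*(c m - β)) * s (m+1) k
        = x k - x (k+1) := by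
      intro k
      have hck : poch (c m) k ≠ 0 := poch_ne_zero_of_nat (n+1+m) (by omega) k
      have hckk : c m + k ≠ 0 := by
        simp only [hc_def]
        rw [show ((n+1+m:ℕ):ℂ) + (k:ℂ) = ((n+1+m+k : ℕ):ℂ) by push_cast; ring]
        exact Nat.cast_ne_zero.mpr (by omega)
      have hid := step_id α β (c m) k hck (hcne m) hckk
      have hc1 : c m + 1 = ((n+1+(m+1) : ℕ):ℂ) := by simp only [hc_def]; push_cast; ring
      rw [hc1] at hid
      show _ = c m * (k:ℂ) * s m k - c m * (((k+1:ℕ)):ℂ) * s m (k+1)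
      rw [show (((k+1):ℕ):ℂ) = (k:ℂ)+1 by push_cast; rfl]
      exact hid
    simp only [h2] at hA'
    have h3' : Tendsto (fun k => x (k+1)) atTop (𝓝 0) := by
      apply squeeze_zero_norm'
        (a := fun k : ℕ => 2 * Complex.abs (c m) * D * (k:ℝ)^(e+1))
      · filter_upwards [eventually_ge_atTop 1] with k hk
        have hk0 : (0:ℝ) < (k:ℝ) := by exact_mod_cast hk
        have h1 : ‖x (k+1)‖
            = Complex.abs (c m) * (((k+1:ℕ)):ℝ) * Complex.abs (s m (k+1)) := by
          simp only [hx_def, Complex.norm_eq_abs, map_mul, Complex.abs_natCast]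
        rw [h1]
        calc Complex.abs (c m) * (((k+1:ℕ)):ℝ) * Complex.abs (s m (k+1))
            ≤ Complex.abs (c m) * (((k+1:ℕ)):ℝ) * (D * (k:ℝ)^e) := by
              apply mul_le_mul_of_nonneg_left (hsb m k hk) (by positivity)
          _ ≤ (Complex.abs (c m) * (2*(k:ℝ))) * (D * (k:ℝ)^e) := by
              apply mul_le_mul_of_nonneg_right _ (by positivity)
              apply mul_le_mul_of_nonneg_left _ (Complex.abs.nonneg _)
              have hk1 : (1:ℝ) ≤ (k:ℝ) := by exact_mod_cast hk
              push_cast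
              linarith
          _ = 2 * Complex.abs (c m) * D * (k:ℝ)^(e+1) := by
              rw [Real.rpow_add_one hk0.ne']
              ring
      · have hpow : Tendsto (fun t : ℝ => t ^ (e+1)) atTop (𝓝 0) := by
          simpa using tendsto_rpow_neg_atTop (y := -(e+1)) (by linarith)
        have := (hpow.comp tendsto_natCast_atTop_atTop).const_mul
          (2 * Complex.abs (c m) * D)
        simpa [Function.comp] using this
    have h3 : Tendsto x atTop (𝓝 0) := (tendsto_add_atTop_iff_nat 1).mp h3'
    have heqs : ∀ N, ∑ i ∈ Finset.range N, (x i - x (i+1)) = x 0 - x N :=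
      fun N => Finset.sum_range_sub' x N
    have hx0 : x 0 = 0 := by simp [hx_def]
    have h6 : Tendsto (fun N => x 0 - x N) atTop (𝓝 0) := by
      have h6' : Tendsto (fun N : ℕ => x 0 - x N) atTop (𝓝 (x 0 - 0)) :=
        tendsto_const_nhds.sub h3
      simpa [hx0] using h6'
    have h5 : (c m * (c m - α - β)) * S m - ((c m - α)*(c m - β)) * S (m+1) = 0 :=
      tendsto_nhds_unique (Tendsto.congr heqs hA'.tendsto_sum_nat) h6
    have hAne : (c m * (c m - α - β)) ≠ 0 := mul_ne_zero (hcne m) (hcsub m)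
    have h7 := sub_eq_zero.mp h5
    rw [div_mul_eq_mul_div, eq_div_iff hAne]
    linear_combination h7
  -- iterate the recurrence
  set R : ℕ → ℂ := fun m => ∏ j ∈ Finset.range m,
      ((c j - α)*(c j - β)/((c j)*(c j - α - β))) with hR_def
  have hiter : ∀ m, S 0 = R m * S m := by
    intro m
    induction m with
    | zero => simp [hR_def]
    | succ m ih =>
        rw [ih, hrec m]
        simp only [hR_def]
        rw [Finset.prod_range_succ]
        ring
  have hRpoch : ∀ m, R m = poch ((n:ℂ)+1-α) m * poch ((n:ℂ)+1-β) m
      / (poch ((n:ℂ)+1) m * poch ((n:ℂ)+1-α-β) m) := by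
    intro m
    simp only [hR_def, poch]
    rw [Finset.prod_div_distrib, Finset.prod_mul_distrib, Finset.prod_mul_distrib]
    congr 1
    · congr 1
      · apply Finset.prod_congr rfl; intro j _; simp only [hc_def]; push_cast; ring
      · apply Finset.prod_congr rfl; intro j _; simp only [hc_def]; push_cast; ring
    · congr 1
      · apply Finset.prod_congr rfl; intro j _; simp only [hc_def]; push_cast; ring
      · apply Finset.prod_congr rfl; intro j _; simp only [hc_def]; push_cast; ring
  have hx3 : Complex.Gamma ((n:ℂ)+1) ≠ 0 := by
    apply Complex.Gamma_ne_zero_of_re_pos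
    simp only [Complex.add_re, Complex.natCast_re, Complex.one_re]
    positivity
  have hx4 : Complex.Gamma ((n:ℂ)+1-α-β) ≠ 0 := by
    apply Complex.Gamma_ne_zero_of_re_pos
    simp only [Complex.sub_re, Complex.add_re, Complex.natCast_re, Complex.one_re]
    linarith
  have t1 := tendsto_poch_div ((n:ℂ)+1-α) hA
  have t2 := tendsto_poch_div ((n:ℂ)+1-β) hB
  have t3 := tendsto_poch_div ((n:ℂ)+1) hx3
  have t4 := tendsto_poch_div ((n:ℂ)+1-α-β) hx4
  have hden_ne : (Complex.Gamma ((n:ℂ)+1))⁻¹ * (Complex.Gamma ((n:ℂ)+1-α-β))⁻¹ ≠ 0 :=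
    mul_ne_zero (inv_ne_zero hx3) (inv_ne_zero hx4)
  have hcomb := Filter.Tendsto.div (t1.mul t2) (t3.mul t4) hden_ne
  have hev : (fun m : ℕ =>
      (poch ((n:ℂ)+1-α) (m+1) / ((m:ℂ)^((n:ℂ)+1-α) * m.factorial))
        * (poch ((n:ℂ)+1-β) (m+1) / ((m:ℂ)^((n:ℂ)+1-β) * m.factorial))
        / ((poch ((n:ℂ)+1) (m+1) / ((m:ℂ)^((n:ℂ)+1) * m.factorial))
        * (poch ((n:ℂ)+1-α-β) (m+1) / ((m:ℂ)^((n:ℂ)+1-α-β) * m.factorial))))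
      =ᶠ[atTop] (fun m : ℕ => R (m+1)) := by
    filter_upwards [eventually_ge_atTop 1] with m hm
    have hm0 : ((m:ℂ)) ≠ 0 := Nat.cast_ne_zero.mpr (by omega)
    have hfacne : ((m.factorial : ℂ)) ≠ 0 := Nat.cast_ne_zero.mpr m.factorial_ne_zero
    have hcpne : ∀ y : ℂ, (m:ℂ) ^ y ≠ 0 := by
      intro y
      simp only [ne_eq, Complex.cpow_eq_zero_iff, not_and]
      intro h; exact absurd h hm0
    have hd12 : ((m:ℂ)^((n:ℂ)+1-α) * m.factorial) * ((m:ℂ)^((n:ℂ)+1-β) * m.factorial)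
        = ((m:ℂ)^((n:ℂ)+1) * m.factorial) * ((m:ℂ)^((n:ℂ)+1-α-β) * m.factorial) := by
      rw [mul_mul_mul_comm, ← Complex.cpow_add _ _ hm0,
          mul_mul_mul_comm ((m:ℂ)^((n:ℂ)+1)), ← Complex.cpow_add _ _ hm0]
      congr 2
      ring
    rw [div_mul_div_comm, div_mul_div_comm, div_div_div_comm, hd12, div_self
      (mul_ne_zero (mul_ne_zero (hcpne _) hfacne) (mul_ne_zero (hcpne _) hfacne)),
      div_one, hRpoch]
  have hRlim : Tendsto R atTop
      (𝓝 (((Complex.Gamma ((n:ℂ)+1-α))⁻¹ * (Complex.Gamma ((n:ℂ)+1-β))⁻¹)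
        / ((Complex.Gamma ((n:ℂ)+1))⁻¹ * (Complex.Gamma ((n:ℂ)+1-α-β))⁻¹))) := by
    have h := hcomb.congr' hev
    exact (tendsto_add_atTop_iff_nat 1).mp h
  have hSlim : Tendsto (fun m => R m * S m) atTop
      (𝓝 ((((Complex.Gamma ((n:ℂ)+1-α))⁻¹ * (Complex.Gamma ((n:ℂ)+1-β))⁻¹)
        / ((Complex.Gamma ((n:ℂ)+1))⁻¹ * (Complex.Gamma ((n:ℂ)+1-α-β))⁻¹)) * 1)) :=
    hRlim.mul hS1
  have hS0 : S 0 = (((Complex.Gamma ((n:ℂ)+1-α))⁻¹ * (Complex.Gamma ((n:ℂ)+1-β))⁻¹)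
      / ((Complex.Gamma ((n:ℂ)+1))⁻¹ * (Complex.Gamma ((n:ℂ)+1-α-β))⁻¹)) * 1 :=
    tendsto_nhds_unique tendsto_const_nhds (hSlim.congr (fun m => (hiter m).symm))
  have hVL : (((Complex.Gamma ((n:ℂ)+1-α))⁻¹ * (Complex.Gamma ((n:ℂ)+1-β))⁻¹)
      / ((Complex.Gamma ((n:ℂ)+1))⁻¹ * (Complex.Gamma ((n:ℂ)+1-α-β))⁻¹)) * 1
      = Complex.Gamma ((n:ℂ)+1) * Complex.Gamma ((n:ℂ)+1-α-β) /
        (Complex.Gamma ((n:ℂ)+1-α) * Complex.Gamma ((n:ℂ)+1-β)) := by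
    field_simp
  have hfun : (fun k => poch α k * poch β k / (poch ((n:ℂ)+1) k * (k.factorial:ℂ))) = s 0 := by
    funext k
    simp only [hs_def]
    rw [show ((n+1+0:ℕ):ℂ) = (n:ℂ)+1 by push_cast; ring]
  rw [hfun, ← hVL, ← hS0]
  exact (hsum 0).hasSum
lemma poch_succ' (x : ℂ) (k : ℕ) : poch x (k+1) = x * poch (x+1) k := by
  rw [poch, Finset.prod_range_succ']
  simp only [Nat.cast_zero, add_zero, mul_comm]
  congr 1
  apply Finset.prod_congr rfl
  intro j _
  push_cast
  ring

lemma poch_add (x : ℂ) (a b : ℕ) : poch x (a+b) = poch x a * poch (x + (a:ℂ)) b := by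
  induction b with
  | zero => simp [poch_zero]
  | succ b ih =>
      rw [show a + (b+1) = (a+b)+1 by ring, poch_succ, ih, poch_succ]
      push_cast
      ring

lemma poch_reflect (x : ℂ) (n : ℕ) : poch x n = (-1)^n * poch (-x - (n:ℂ) + 1) n := by
  induction n with
  | zero => simp [poch_zero]
  | succ n ih =>
      rw [poch_succ, ih, poch_succ' (-x - ((n+1:ℕ):ℂ) + 1) n]
      have h1 : (-x - ((n+1:ℕ):ℂ) + 1) + 1 = -x - (n:ℂ) + 1 := by push_cast; ring
      rw [h1]
      push_cast
      ring

lemma fact_prod_c (a k : ℕ) :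
    ((a.factorial : ℂ)) * poch ((a:ℂ)+1) k = (((a+k).factorial : ℂ)) := by
  induction k with
  | zero => simp [poch_zero]
  | succ k ih =>
      rw [poch_succ, ← mul_assoc, ih, show a + (k+1) = (a+k) + 1 by ring,
        Nat.factorial_succ]
      push_cast
      ring

theorem stmt_3 (p q : ℂ) (hp : ∀ m : ℤ, p ≠ m) (hq : ∀ m : ℤ, q ≠ m)
    (hpq : 1 < (p + q).re) (n : ℕ) :
    HasSum
      (fun k : ℕ =>
        Complex.Gamma (1 - p + n + k) * Complex.Gamma (1 - q + k) /
          (Complex.Gamma (1 - p) * Complex.Gamma (1 - q) *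
            Complex.Gamma ((n : ℂ) + k + 1) * Complex.Gamma ((k : ℂ) + 1)))
      ((-1 : ℂ) ^ n * Complex.Gamma (p + q - 1) /
        (Complex.Gamma (p - n) * Complex.Gamma (q + n))) := by
  set α : ℂ := 1 - p + (n:ℂ) with hα_def
  set β : ℂ := 1 - q with hβ_def
  have h1p : ∀ j : ℕ, (1 - p) + (j:ℂ) ≠ 0 := by
    intro j h
    apply hp (1 + (j:ℤ))
    have : p = 1 + (j:ℂ) := by linear_combination -h
    rw [this]; push_cast; ring
  have h1q : ∀ j : ℕ, (1 - q) + (j:ℂ) ≠ 0 := by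
    intro j h
    apply hq (1 + (j:ℤ))
    have : q = 1 + (j:ℂ) := by linear_combination -h
    rw [this]; push_cast; ring
  have hΓ1p : Complex.Gamma (1 - p) ≠ 0 := by
    apply Complex.Gamma_ne_zero
    intro m h
    apply hp (1 + (m:ℤ))
    have : p = 1 + (m:ℂ) := by linear_combination -h
    rw [this]; push_cast; ring
  have hΓ1q : Complex.Gamma (1 - q) ≠ 0 := by
    apply Complex.Gamma_ne_zero
    intro m h
    apply hq (1 + (m:ℤ))
    have : q = 1 + (m:ℂ) := by linear_combination -h
    rw [this]; push_cast; ring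
  have hΓα : Complex.Gamma α ≠ 0 := by
    apply Complex.Gamma_ne_zero
    intro m h
    apply hp (1 + (n:ℤ) + (m:ℤ))
    have : p = 1 + (n:ℂ) + (m:ℂ) := by rw [hα_def] at h; linear_combination -h
    rw [this]; push_cast; ring
  have hΓβ : Complex.Gamma β ≠ 0 := hΓ1q
  have hαA : (n:ℂ) + 1 - α = p := by rw [hα_def]; ring
  have hβB : (n:ℂ) + 1 - β = q + (n:ℂ) := by rw [hβ_def]; ring
  have hΓp : Complex.Gamma p ≠ 0 := by
    apply Complex.Gamma_ne_zero
    intro m h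
    exact hp (-(m:ℤ)) (by rw [h]; push_cast; ring)
  have hΓqn : Complex.Gamma (q + (n:ℂ)) ≠ 0 := by
    apply Complex.Gamma_ne_zero
    intro m h
    apply hq (-(m:ℤ) - (n:ℤ))
    have : q = -(m:ℂ) - (n:ℂ) := by linear_combination h
    rw [this]; push_cast; ring
  have hΓpn : Complex.Gamma (p - (n:ℂ)) ≠ 0 := by
    apply Complex.Gamma_ne_zero
    intro m h
    apply hp ((n:ℤ) - (m:ℤ))
    have : p = (n:ℂ) - (m:ℂ) := by linear_combination h
    rw [this]; push_cast; ring
  have hA : Complex.Gamma ((n:ℂ)+1-α) ≠ 0 := by rw [hαA]; exact hΓp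
  have hB : Complex.Gamma ((n:ℂ)+1-β) ≠ 0 := by rw [hβB]; exact hΓqn
  have hre : α.re + β.re < (n:ℝ)+1 := by
    rw [hα_def, hβ_def]
    simp only [Complex.add_re, Complex.sub_re, Complex.one_re, Complex.natCast_re]
    rw [Complex.add_re] at hpq
    linarith
  have G := gauss α β n hΓα hΓβ hA hB hre
  -- rewrite the goal function
  have hpn : ∀ j : ℕ, (p - (n:ℂ)) + (j:ℂ) ≠ 0 := by
    intro j h
    apply hp ((n:ℤ) - (j:ℤ))
    have : p = (n:ℂ) - (j:ℂ) := by linear_combination h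
    rw [this]; push_cast; ring
  have hpochpn : poch (p - (n:ℂ)) n ≠ 0 := by
    apply Finset.prod_ne_zero_iff.mpr
    intro j _
    exact hpn j
  have hfun : (fun k : ℕ =>
        Complex.Gamma (1 - p + n + k) * Complex.Gamma (1 - q + k) /
          (Complex.Gamma (1 - p) * Complex.Gamma (1 - q) *
            Complex.Gamma ((n : ℂ) + k + 1) * Complex.Gamma ((k : ℂ) + 1)))
      = fun k => (poch (1-p) n / (n.factorial : ℂ)) *
          (poch α k * poch β k / (poch ((n:ℂ)+1) k * (k.factorial : ℂ))) := by
    funext k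
    have e1 : Complex.Gamma (1 - p + n + k) = poch (1-p) (n+k) * Complex.Gamma (1-p) := by
      rw [show (1 - p + (n:ℂ) + (k:ℂ)) = (1-p) + ((n+k : ℕ):ℂ) by push_cast; ring]
      exact Gamma_poch (1-p) h1p (n+k)
    have e2 : Complex.Gamma (1 - q + k) = poch β k * Complex.Gamma (1-q) :=
      Gamma_poch (1-q) h1q k
    have e3 : Complex.Gamma ((n:ℂ) + k + 1) = (((n+k).factorial : ℂ)) := by
      rw [show ((n:ℂ) + (k:ℂ) + 1) = ((n+k : ℕ):ℂ) + 1 by push_cast; ring]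
      exact Complex.Gamma_nat_eq_factorial (n+k)
    have e4 : Complex.Gamma ((k:ℂ) + 1) = ((k.factorial : ℂ)) :=
      Complex.Gamma_nat_eq_factorial k
    have e5 : (((n+k).factorial : ℂ)) = (n.factorial : ℂ) * poch ((n:ℂ)+1) k :=
      (fact_prod_c n k).symm
    have e6 : poch (1-p) (n+k) = poch (1-p) n * poch α k := poch_add (1-p) n k
    rw [e1, e2, e3, e4, e5, e6]
    have hnfac : ((n.factorial : ℂ)) ≠ 0 := Nat.cast_ne_zero.mpr n.factorial_ne_zero
    have hkfac : ((k.factorial : ℂ)) ≠ 0 := Nat.cast_ne_zero.mpr k.factorial_ne_zero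
    have hpoch : poch ((n:ℂ)+1) k ≠ 0 := by
      have := poch_ne_zero_of_nat (n+1) (by omega) k
      rwa [show ((n+1:ℕ):ℂ) = (n:ℂ)+1 by push_cast; ring] at this
    field_simp
  rw [hfun]
  have H := G.mul_left (poch (1-p) n / (n.factorial : ℂ))
  convert H using 1
  · rfl
  -- value equality
  rw [show (n:ℂ)+1-α-β = p+q-1 by rw [hα_def, hβ_def]; ring, hαA, hβB,
    Complex.Gamma_nat_eq_factorial n]
  have hrefl : poch (1-p) n = (-1)^n * poch (p - (n:ℂ)) n := by
    rw [poch_reflect (1-p) n, show -(1-p) - (n:ℂ) + 1 = p - (n:ℂ) by ring]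
  have hgp : Complex.Gamma p = poch (p - (n:ℂ)) n * Complex.Gamma (p - (n:ℂ)) := by
    have := Gamma_poch (p - (n:ℂ)) hpn n
    rwa [show (p - (n:ℂ)) + (n:ℂ) = p by ring] at this
  rw [hrefl, hgp]
  have hnfac : ((n.factorial : ℂ)) ≠ 0 := Nat.cast_ne_zero.mpr n.factorial_ne_zero
  field_simp [hΓpn, hΓqn, hpochpn]
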